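/- arXiv:1711.08852 — 3 statements merged into one kernel-verified Lean document; each statement's English description precedes it below -/
import Mathlib

section
/- Let S be a rooted binary tree of height n with the lazy Markov chain P' (P'(i,i) ≥ 1/2, P' = (I+P)/2) and stationary distribution π(u) = α·2^{n-depth(u)}. Then the conductance Φ = min{ Σ_{i∈Y,j∉Y} π(i)P'(i,j) / π(Y) : Y ⊆ V(S), 0 < π(Y) ≤ 1/2 } satisfies Φ ≥ 1/(4(n+1)). -/
open Finset

/-- A rooted binary tree of height `n`: nodes are paths from the root,
encoded as lists of booleans (most recent step first), the root is `[]`,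
the parent of a nonempty node `u` is `u.tail`, all depths are `≤ n`,
and the node set is closed under taking parents. -/
structure BinTree (n : ℕ) where
  V : Finset (List Bool)
  root_mem : [] ∈ V
  height_le : ∀ u ∈ V, u.length ≤ n
  parent_mem : ∀ u ∈ V, u.tail ∈ V

/-- The transition kernel of the Markov chain on the nodes of a tree with
node set `V`: probability `1/2` to the parent, `1/4` to each child in `V`,
and the remaining probability as a self-loop. -/
noncomputable def kernel (V : Finset (List Bool)) (i j : List Bool) : ℝ :=
  if j = i then
    1 - ((if i = [] then 0 else (1 : ℝ) / 2)
      + ((V.filter (fun v => v ≠ [] ∧ v.tail = i)).card : ℝ) / 4)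
  else if i ≠ [] ∧ j = i.tail then 1 / 2
  else if j ≠ [] ∧ j.tail = i ∧ j ∈ V then 1 / 4
  else 0

/-- The lazy version `(I + P)/2` of the kernel. -/
noncomputable def lazyKernel (V : Finset (List Bool)) (i j : List Bool) : ℝ :=
  ((if j = i then (1 : ℝ) else 0) + kernel V i j) / 2

/-- At most `2^(L - |a|)` lists of length `L` having `a` as suffix. -/
lemma card_suffix_le (a : List Bool) (L : ℕ) (S : Finset (List Bool))
    (hS : ∀ u ∈ S, u.length = L ∧ a <:+ u) :
    S.card ≤ 2 ^ (L - a.length) := by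
  classical
  have key : ∀ u ∈ S, u.drop (L - a.length) = a := by
    intro u hu
    obtain ⟨hlen, t, ht⟩ := hS u hu
    have htl : t.length = L - a.length := by
      have h := congrArg List.length ht
      simp only [List.length_append] at h
      omega
    rw [← ht, ← htl, List.drop_left]
  have hcard : S.card ≤ Fintype.card (Fin (L - a.length) → Bool) := by
    apply Finset.card_le_card_of_injOn (fun u (i : Fin (L - a.length)) => u.getD i false)
      (fun _ _ => Finset.mem_univ _)
    intro u₁ h₁ u₂ h₂ heq
    have hl₁ := (hS u₁ h₁).1
    have hl₂ := (hS u₂ h₂).1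
    have hal : a.length ≤ L := by
      have := (hS u₁ h₁).2.length_le; omega
    set m := L - a.length with hm
    have hmL : m ≤ L := Nat.sub_le _ _
    have htake : u₁.take m = u₂.take m := by
      apply List.ext_getElem
      · simp [hl₁, hl₂]
      · intro i hi1 hi2
        have him' : i < m ∧ i < L := by
          simpa [hl₁, Nat.lt_min] using hi1
        have him : i < m := him'.1
        rw [List.getElem_take, List.getElem_take]
        have hfun := congrFun heq ⟨i, him⟩
        simp only at hfun
        rwa [List.getD_eq_getElem _ _ (by omega), List.getD_eq_getElem _ _ (by omega)] at hfun
    calc u₁ = u₁.take m ++ u₁.drop m := (List.take_append_drop m u₁).symm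
      _ = u₂.take m ++ u₂.drop m := by rw [htake, key u₁ h₁, key u₂ h₂]
      _ = u₂ := List.take_append_drop m u₂
  simpa using hcard

/-- Subtree mass: all nodes having `a` as suffix have total weight
at most `(n+1)` times the weight of `a`. -/
lemma mass_le (n : ℕ) (a : List Bool) (S : Finset (List Bool))
    (hS : ∀ u ∈ S, u.length ≤ n ∧ a <:+ u) :
    ∑ u ∈ S, (2:ℝ)^(n - u.length) ≤ ((n:ℝ)+1) * 2^(n - a.length) := by
  classical
  have hfw := Finset.sum_fiberwise_of_maps_to (s := S) (t := Finset.range (n+1))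
      (g := fun u => u.length)
      (fun u hu => Finset.mem_range.mpr (Nat.lt_succ_of_le (hS u hu).1))
      (fun u => (2:ℝ)^(n - u.length))
  rw [← hfw]
  have hbound : ∀ L ∈ Finset.range (n+1),
      ∑ u ∈ S.filter (fun u => u.length = L), (2:ℝ)^(n - u.length) ≤ 2^(n - a.length) := by
    intro L hL
    have hLn : L ≤ n := by have := Finset.mem_range.mp hL; omega
    by_cases haL : a.length ≤ L
    · have hcard : (S.filter (fun u => u.length = L)).card ≤ 2^(L - a.length) := by
        apply card_suffix_le
        intro u hu
        obtain ⟨huS, hul⟩ := Finset.mem_filter.mp hu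
        exact ⟨hul, (hS u huS).2⟩
      have heq : ∑ u ∈ S.filter (fun u => u.length = L), (2:ℝ)^(n - u.length)
          = ((S.filter (fun u => u.length = L)).card : ℝ) * 2^(n - L) := by
        rw [Finset.sum_congr rfl (fun u hu => by
          rw [(Finset.mem_filter.mp hu).2]), Finset.sum_const, nsmul_eq_mul]
      rw [heq]
      have h2 : ((S.filter (fun u => u.length = L)).card : ℝ) ≤ 2^(L - a.length) := by
        exact_mod_cast hcard
      calc ((S.filter (fun u => u.length = L)).card : ℝ) * 2^(n - L)
          ≤ 2^(L - a.length) * 2^(n - L) := by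
            apply mul_le_mul_of_nonneg_right h2 (by positivity)
        _ = 2^(n - a.length) := by
            rw [← pow_add]
            congr 1
            omega
    · have hempty : S.filter (fun u => u.length = L) = ∅ := by
        ext u
        simp only [Finset.mem_filter, Finset.notMem_empty, iff_false, not_and]
        intro huS hul
        have := (hS u huS).2.length_le
        omega
      rw [hempty]
      simp

  calc ∑ L ∈ Finset.range (n+1), ∑ u ∈ S.filter (fun u => u.length = L), (2:ℝ)^(n - u.length)
      ≤ ∑ _L ∈ Finset.range (n+1), (2:ℝ)^(n - a.length) := Finset.sum_le_sum hbound
    _ = ((n:ℝ)+1) * 2^(n - a.length) := by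
        rw [Finset.sum_const, Finset.card_range, nsmul_eq_mul]
        push_cast
        ring

lemma lazy_nonneg (V : Finset (List Bool)) {i j : List Bool} (h : ¬ j = i) :
    0 ≤ lazyKernel V i j := by
  unfold lazyKernel kernel
  rw [if_neg h, if_neg h]
  split_ifs <;> norm_num

lemma lazy_parent (V : Finset (List Bool)) (a : List Bool) (ha : a ≠ []) :
    lazyKernel V a a.tail = 1/4 := by
  have hlt : a.tail.length < a.length := by
    rw [List.length_tail]
    have := List.length_pos_iff.mpr ha
    omega
  have hne : ¬ a.tail = a := by
    intro h
    rw [h] at hlt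
    omega
  unfold lazyKernel kernel
  rw [if_neg hne, if_neg hne, if_pos ⟨ha, rfl⟩]
  norm_num

/-- Detailed balance for the unnormalized weights. -/
lemma rev_w (n : ℕ) (V : Finset (List Bool)) (hht : ∀ u ∈ V, u.length ≤ n)
    (i j : List Bool) (hi : i ∈ V) (hj : j ∈ V) :
    (2:ℝ)^(n - i.length) * lazyKernel V i j = (2:ℝ)^(n - j.length) * lazyKernel V j i := by
  by_cases hij : j = i
  · subst hij; rfl
  have hji : ¬ i = j := fun h => hij h.symm
  unfold lazyKernel
  rw [if_neg hij, if_neg hji]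
  unfold kernel
  rw [if_neg hij, if_neg hji]
  by_cases h1 : i ≠ [] ∧ j = i.tail
  · rw [if_pos h1]
    have hipos : 0 < i.length := List.length_pos_iff.mpr h1.1
    have hlen : j.length = i.length - 1 := by rw [h1.2, List.length_tail]
    have h2f : ¬(j ≠ [] ∧ i = j.tail) := by
      rintro ⟨hjne, hji2⟩
      have h3 : i.length = j.length - 1 := by rw [hji2, List.length_tail]
      have := List.length_pos_iff.mpr hjne
      omega
    rw [if_neg h2f, if_pos ⟨h1.1, h1.2.symm, hi⟩]
    have hin : i.length ≤ n := hht i hi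
    have hexp : n - j.length = (n - i.length) + 1 := by omega
    rw [hexp, pow_succ]
    ring
  · by_cases h2 : j ≠ [] ∧ i = j.tail
    · rw [if_neg h1, if_pos ⟨h2.1, h2.2.symm, hj⟩, if_pos h2]
      have hjpos : 0 < j.length := List.length_pos_iff.mpr h2.1
      have hlen : i.length = j.length - 1 := by rw [h2.2, List.length_tail]
      have hjn : j.length ≤ n := hht j hj
      have hexp : n - i.length = (n - j.length) + 1 := by omega
      rw [hexp, pow_succ]
      ring
    · rw [if_neg h1, if_neg h2]
      have h3 : ¬(j ≠ [] ∧ j.tail = i ∧ j ∈ V) := fun ⟨ha, hb, _⟩ => h2 ⟨ha, hb.symm⟩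
      have h4 : ¬(i ≠ [] ∧ i.tail = j ∧ i ∈ V) := fun ⟨ha, hb, _⟩ => h1 ⟨ha, hb.symm⟩
      rw [if_neg h3, if_neg h4]
      ring

open Classical in
/-- The nearest boundary ancestor of `u`. -/
noncomputable def bdry (Y : Finset (List Bool)) (u : List Bool) : List Bool :=
  if h : ∃ k, u.drop k ∉ Y then u.drop (Nat.find h - 1) else []

lemma bdry_spec (Y : Finset (List Bool)) (u : List Bool) (hu : u ∈ Y) (hroot : [] ∉ Y) :
    bdry Y u ∈ Y ∧ (bdry Y u).tail ∉ Y ∧ bdry Y u <:+ u := by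
  classical
  have h : ∃ k, u.drop k ∉ Y := ⟨u.length, by rw [List.drop_length]; exact hroot⟩
  unfold bdry
  rw [dif_pos h]
  have h1 : 1 ≤ Nat.find h := by
    rcases Nat.eq_zero_or_pos (Nat.find h) with h0 | h0
    · exfalso
      have hs := Nat.find_spec h
      rw [h0] at hs
      exact hs (by simpa using hu)
    · exact h0
  refine ⟨?_, ?_, List.drop_suffix _ _⟩
  · have := Nat.find_min h (show Nat.find h - 1 < Nat.find h by omega)
    exact not_not.mp this
  · rw [List.tail_drop]
    have he : Nat.find h - 1 + 1 = Nat.find h := by omega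
    rw [he]
    exact Nat.find_spec h

/-- Main lemma: if the root is not in `Y`, the crossing weight is at least
`π(Y)/(4(n+1))`. -/
lemma cross_ge (n : ℕ) (V Y : Finset (List Bool)) (hY : Y ⊆ V) (hroot : [] ∉ Y)
    (hrootV : [] ∈ V) (hpar : ∀ u ∈ V, u.tail ∈ V) (hht : ∀ u ∈ V, u.length ≤ n)
    (π : List Bool → ℝ)
    (hπ : ∀ u, π u = (2:ℝ)^(n - u.length) / ∑ v ∈ V, (2:ℝ)^(n - v.length)) :
    ∑ u ∈ Y, π u ≤ 4 * ((n:ℝ)+1) * ∑ i ∈ Y, ∑ j ∈ V \ Y, π i * lazyKernel V i j := by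
  classical
  set Z := ∑ v ∈ V, (2:ℝ)^(n - v.length) with hZdef
  have hZ : 0 < Z := Finset.sum_pos (fun v _ => by positivity) ⟨[], hrootV⟩
  have hπ0 : ∀ u, 0 ≤ π u := fun u => by rw [hπ]; positivity
  set E := Y.filter (fun a => a.tail ∉ Y) with hE
  have hEne : ∀ a ∈ E, a ≠ [] := by
    intro a ha h
    obtain ⟨ha1, ha2⟩ := Finset.mem_filter.mp ha
    subst h
    exact ha2 ha1
  -- Step 1: the crossing weight dominates the boundary-edge weight
  have step1 : ∑ a ∈ E, π a * (1/4) ≤ ∑ i ∈ Y, ∑ j ∈ V \ Y, π i * lazyKernel V i j := by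
    have hsub : E ⊆ Y := Finset.filter_subset _ _
    have inner_nonneg : ∀ i ∈ Y, (0:ℝ) ≤ ∑ j ∈ V \ Y, π i * lazyKernel V i j := by
      intro i hi
      apply Finset.sum_nonneg
      intro j hj
      have hji : ¬ j = i := fun h => (Finset.mem_sdiff.mp hj).2 (h ▸ hi)
      exact mul_nonneg (hπ0 i) (lazy_nonneg V hji)
    have hstep : ∀ a ∈ E, π a * (1/4) ≤ ∑ j ∈ V \ Y, π a * lazyKernel V a j := by
      intro a ha
      obtain ⟨haY, haT⟩ := Finset.mem_filter.mp ha
      have hane := hEne a ha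
      have htmem : a.tail ∈ V \ Y := Finset.mem_sdiff.mpr ⟨hpar a (hY haY), haT⟩
      have heq : π a * (1/4) = π a * lazyKernel V a a.tail := by
        rw [lazy_parent V a hane]
      rw [heq]
      apply Finset.single_le_sum (f := fun j => π a * lazyKernel V a j) ?_ htmem
      intro j hj
      have hji : ¬ j = a := fun h => (Finset.mem_sdiff.mp hj).2 (h ▸ haY)
      exact mul_nonneg (hπ0 a) (lazy_nonneg V hji)
    calc ∑ a ∈ E, π a * (1/4)
        ≤ ∑ a ∈ E, ∑ j ∈ V \ Y, π a * lazyKernel V a j := Finset.sum_le_sum hstep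
      _ ≤ ∑ i ∈ Y, ∑ j ∈ V \ Y, π i * lazyKernel V i j :=
          Finset.sum_le_sum_of_subset_of_nonneg hsub (fun i hi _ => inner_nonneg i hi)
  -- Step 2: π(Y) ≤ (n+1) π(E)
  have hmaps : ∀ u ∈ Y, bdry Y u ∈ E := by
    intro u hu
    obtain ⟨hb1, hb2, _⟩ := bdry_spec Y u hu hroot
    exact Finset.mem_filter.mpr ⟨hb1, hb2⟩
  have step2 : ∑ u ∈ Y, π u ≤ ((n:ℝ)+1) * ∑ a ∈ E, π a := by
    rw [← Finset.sum_fiberwise_of_maps_to hmaps π, Finset.mul_sum]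
    apply Finset.sum_le_sum
    intro a ha
    have haY : a ∈ Y := (Finset.mem_filter.mp ha).1
    have hfib : ∀ u ∈ Y.filter (fun u => bdry Y u = a), u.length ≤ n ∧ a <:+ u := by
      intro u hu
      obtain ⟨huY, hub⟩ := Finset.mem_filter.mp hu
      exact ⟨hht u (hY huY), hub ▸ (bdry_spec Y u huY hroot).2.2⟩
    have hmass := mass_le n a _ hfib
    calc ∑ u ∈ Y.filter (fun u => bdry Y u = a), π u
        = (∑ u ∈ Y.filter (fun u => bdry Y u = a), (2:ℝ)^(n - u.length)) / Z := by
          rw [Finset.sum_div]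
          exact Finset.sum_congr rfl (fun u _ => hπ u)
      _ ≤ (((n:ℝ)+1) * 2^(n - a.length)) / Z := by
          gcongr
      _ = ((n:ℝ)+1) * π a := by rw [hπ a]; ring
  -- combine
  have hsum : ∑ a ∈ E, π a * (1/4) = (∑ a ∈ E, π a) * (1/4) := by
    rw [Finset.sum_mul]
  calc ∑ u ∈ Y, π u ≤ ((n:ℝ)+1) * ∑ a ∈ E, π a := step2
    _ = 4 * ((n:ℝ)+1) * ∑ a ∈ E, π a * (1/4) := by rw [hsum]; ring
    _ ≤ 4 * ((n:ℝ)+1) * ∑ i ∈ Y, ∑ j ∈ V \ Y, π i * lazyKernel V i j := by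
        apply mul_le_mul_of_nonneg_left step1 (by positivity)

/-- Conductance bound for the lazy chain: for every subset $Y$ of the nodes
with $0 < \pi(Y) \le 1/2$, the ratio of the crossing edge weight
$\sum_{i\in Y, j\notin Y}\pi(i)P'(i,j)$ to $\pi(Y)$ is at least $1/(4(n+1))$;
hence $\Phi \ge 1/(4(n+1))$. -/
theorem stmt9 (n : ℕ) (T : BinTree n) (Y : Finset (List Bool)) (hY : Y ⊆ T.V)
    (π : List Bool → ℝ)
    (hπ : ∀ u, π u = (2 : ℝ) ^ (n - u.length) / ∑ v ∈ T.V, (2 : ℝ) ^ (n - v.length))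
    (h0 : 0 < ∑ u ∈ Y, π u) (h2 : ∑ u ∈ Y, π u ≤ 1 / 2) :
    (∑ i ∈ Y, ∑ j ∈ T.V \ Y, π i * lazyKernel T.V i j) / (∑ u ∈ Y, π u)
      ≥ 1 / (4 * (n + 1)) := by
  classical
  have hZ : 0 < ∑ v ∈ T.V, (2:ℝ)^(n - v.length) :=
    Finset.sum_pos (fun v _ => by positivity) ⟨[], T.root_mem⟩
  rw [ge_iff_le, div_le_div_iff₀ (by positivity) h0]
  by_cases hroot : [] ∈ Y
  · -- complement case
    have hY' : T.V \ Y ⊆ T.V := Finset.sdiff_subset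
    have hroot' : [] ∉ T.V \ Y := fun h => (Finset.mem_sdiff.mp h).2 hroot
    have key := cross_ge n T.V (T.V \ Y) hY' hroot' T.root_mem T.parent_mem T.height_le π hπ
    have hrev : ∀ i ∈ T.V, ∀ j ∈ T.V,
        π i * lazyKernel T.V i j = π j * lazyKernel T.V j i := by
      intro i hi j hj
      rw [hπ i, hπ j, div_mul_eq_mul_div, div_mul_eq_mul_div,
        rev_w n T.V T.height_le i j hi hj]
    have hswap : ∑ i ∈ Y, ∑ j ∈ T.V \ Y, π i * lazyKernel T.V i j
        = ∑ i ∈ T.V \ Y, ∑ j ∈ T.V \ (T.V \ Y), π i * lazyKernel T.V i j := by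
      have e1 : T.V \ (T.V \ Y) = Y := by
        ext x
        simp only [Finset.mem_sdiff]
        constructor
        · rintro ⟨hxV, hx⟩
          by_contra hxY
          exact hx ⟨hxV, hxY⟩
        · intro hxY
          exact ⟨hY hxY, fun h => h.2 hxY⟩
      rw [e1]
      rw [Finset.sum_congr rfl (fun i hi => Finset.sum_congr rfl
        (fun j hj => hrev i (hY hi) j (Finset.mem_sdiff.mp hj).1))]
      exact Finset.sum_comm
    have hsum1 : ∑ u ∈ T.V, π u = 1 := by
      rw [Finset.sum_congr rfl (fun u _ => hπ u), ← Finset.sum_div]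
      exact div_self (ne_of_gt hZ)
    have hcomp : ∑ u ∈ Y, π u ≤ ∑ u ∈ T.V \ Y, π u := by
      rw [Finset.sum_sdiff_eq_sub hY, hsum1]
      linarith
    calc 1 * ∑ u ∈ Y, π u ≤ ∑ u ∈ T.V \ Y, π u := by rw [one_mul]; exact hcomp
      _ ≤ 4 * ((n:ℝ)+1) * ∑ i ∈ T.V \ Y, ∑ j ∈ T.V \ (T.V \ Y),
            π i * lazyKernel T.V i j := key
      _ = (∑ i ∈ Y, ∑ j ∈ T.V \ Y, π i * lazyKernel T.V i j) * (4 * ((n:ℝ) + 1)) := by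
          rw [← hswap]; ring
  · have key := cross_ge n T.V Y hY hroot T.root_mem T.parent_mem T.height_le π hπ
    calc 1 * ∑ u ∈ Y, π u = ∑ u ∈ Y, π u := one_mul _
      _ ≤ 4 * ((n:ℝ)+1) * ∑ i ∈ Y, ∑ j ∈ T.V \ Y, π i * lazyKernel T.V i j := key
      _ = (∑ i ∈ Y, ∑ j ∈ T.V \ Y, π i * lazyKernel T.V i j) * (4 * ((n:ℝ) + 1)) := by
          ring
end

section
/- Let S be a nonempty rooted binary tree of height n with W_i the weighted count of the depth-i truncation (a node at depth d ≤ i contributes 2^{i-d}). Suppose for each i we have estimates Ŵ_i with |Ŵ_i − W_i| ≤ ζ·W_i where ζ = ξ/(2(n+1)) for some ξ > 0. Then the estimate |Ŝ| = Ŵ_n − Σ_{k=0}^{n-1} Ŵ_k satisfies | |Ŝ| − |V(S)| | ≤ ξ·2^n. -/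
open Finset

private lemma card_level (s : Finset (List Bool)) (d : ℕ) :
    (s.filter (fun l => l.length = d)).card ≤ 2 ^ d := by
  have hsub : s.filter (fun l => l.length = d) ⊆
      (Finset.univ : Finset (Fin d → Bool)).image fun f => List.ofFn f := by
    intro l hl
    simp only [mem_filter] at hl
    obtain ⟨-, hlen⟩ := hl
    subst hlen
    simp only [mem_image, mem_univ, true_and]
    exact ⟨l.get, List.ofFn_get l⟩
  calc (s.filter (fun l => l.length = d)).card
      ≤ _ := Finset.card_le_card hsub
    _ ≤ (Finset.univ : Finset (Fin d → Bool)).card := Finset.card_image_le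
    _ = 2 ^ d := by simp

private lemma point_val {d n : ℕ} (hd : d ≤ n) :
    (2:ℝ)^(n-d) - ∑ k ∈ range n, (if d ≤ k then (2:ℝ)^(k-d) else 0) = 1 := by
  have h1 : ∑ k ∈ range n, (if d ≤ k then (2:ℝ)^(k-d) else 0)
      = ∑ k ∈ Ico d n, (2:ℝ)^(k-d) := by
    rw [range_eq_Ico, ← Finset.sum_filter]
    congr 1
    ext k
    simp [Finset.mem_filter, Finset.mem_Ico, and_comm]
  rw [h1, Finset.sum_Ico_eq_sum_range]
  have h2 : ∀ j ∈ range (n - d), (2:ℝ)^(d + j - d) = 2^j := by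
    intro j _; congr 1; omega
  rw [Finset.sum_congr rfl h2, geom_sum_eq (by norm_num : (2:ℝ) ≠ 1) (n - d)]
  norm_num

private lemma telescope (n : ℕ) (T : BinTree n) :
    (∑ u ∈ T.V.filter (fun u => u.length ≤ n), (2:ℝ)^(n - u.length))
      - ∑ k ∈ range n, ∑ u ∈ T.V.filter (fun u => u.length ≤ k), (2:ℝ)^(k - u.length)
      = T.V.card := by
  have hconv : ∀ i, ∑ u ∈ T.V.filter (fun u => u.length ≤ i), (2:ℝ)^(i - u.length)
      = ∑ u ∈ T.V, (if u.length ≤ i then (2:ℝ)^(i - u.length) else 0) := by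
    intro i; rw [Finset.sum_filter]
  simp only [hconv]
  rw [Finset.sum_comm, ← Finset.sum_sub_distrib]
  have h : ∀ u ∈ T.V, (if u.length ≤ n then (2:ℝ)^(n - u.length) else 0)
      - ∑ k ∈ range n, (if u.length ≤ k then (2:ℝ)^(k - u.length) else 0) = 1 := by
    intro u hu
    rw [if_pos (T.height_le u hu)]
    exact point_val (T.height_le u hu)
  rw [Finset.sum_congr rfl h]
  simp

private lemma Wn_bound (n : ℕ) (T : BinTree n) :
    ∑ u ∈ T.V.filter (fun u => u.length ≤ n), (2:ℝ)^(n - u.length)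
      ≤ (n+1) * 2^n := by
  have hfilt : T.V.filter (fun u => u.length ≤ n) = T.V :=
    Finset.filter_true_of_mem T.height_le
  rw [hfilt]
  have hfib : ∑ u ∈ T.V, (2:ℝ)^(n - u.length)
      = ∑ d ∈ range (n+1), ∑ u ∈ T.V.filter (fun u => u.length = d),
          (2:ℝ)^(n - u.length) := by
    rw [Finset.sum_fiberwise_of_maps_to]
    intro u hu
    simp [Nat.lt_succ_of_le (T.height_le u hu)]
  rw [hfib]
  have hle : ∀ d ∈ range (n+1),
      ∑ u ∈ T.V.filter (fun u => u.length = d), (2:ℝ)^(n - u.length) ≤ 2^n := by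
    intro d hd
    have hd' : d ≤ n := by simpa [Nat.lt_succ_iff] using hd
    have hc : ∀ u ∈ T.V.filter (fun u => u.length = d),
        (2:ℝ)^(n - u.length) = 2^(n-d) := by
      intro u hu; rw [(Finset.mem_filter.mp hu).2]
    rw [Finset.sum_congr rfl hc, Finset.sum_const, nsmul_eq_mul]
    calc ((T.V.filter (fun u => u.length = d)).card : ℝ) * 2^(n-d)
        ≤ (2^d : ℝ) * 2^(n-d) := by
          apply mul_le_mul_of_nonneg_right _ (by positivity)
          exact_mod_cast card_level T.V d
      _ = 2^n := by rw [← pow_add]; congr 1; omega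
  calc ∑ d ∈ range (n+1), ∑ u ∈ T.V.filter (fun u => u.length = d),
          (2:ℝ)^(n - u.length)
      ≤ ∑ _d ∈ range (n+1), (2:ℝ)^n := Finset.sum_le_sum hle
    _ = (n+1) * 2^n := by simp [mul_comm]

/-- If each truncation weight $W_i$ is estimated within relative error
$\zeta = \xi/(2(n+1))$, then the derived estimate
$\hat W_n - \sum_{k<n}\hat W_k$ approximates $|V(S)|$ within additive error
$\xi 2^n$. -/
theorem stmt12 (n : ℕ) (T : BinTree n) (ξ : ℝ) (hξ : 0 < ξ)
    (West : ℕ → ℝ)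
    (hW : ∀ i ≤ n,
      |West i - ∑ u ∈ T.V.filter (fun u => u.length ≤ i), (2 : ℝ) ^ (i - u.length)|
        ≤ (ξ / (2 * (n + 1)))
            * ∑ u ∈ T.V.filter (fun u => u.length ≤ i), (2 : ℝ) ^ (i - u.length)) :
    |(West n - ∑ k ∈ Finset.range n, West k) - (T.V.card : ℝ)| ≤ ξ * 2 ^ n := by
  set ζ : ℝ := ξ / (2 * (n + 1)) with hζdef
  set W : ℕ → ℝ :=
    fun i => ∑ u ∈ T.V.filter (fun u => u.length ≤ i), (2:ℝ)^(i - u.length) with hWdef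
  have hW' : ∀ i ≤ n, |West i - W i| ≤ ζ * W i := fun i hi => hW i hi
  have htel : W n - ∑ k ∈ range n, W k = T.V.card := telescope n T
  have hsum_le : ∑ k ∈ range n, W k ≤ W n := by
    have hc : (0:ℝ) ≤ T.V.card := Nat.cast_nonneg _
    linarith
  have hWn : W n ≤ (n+1) * 2^n := Wn_bound n T
  have hζpos : 0 ≤ ζ := by positivity
  have key : |(West n - ∑ k ∈ range n, West k) - (T.V.card : ℝ)|
      ≤ ζ * W n + ∑ k ∈ range n, ζ * W k := by
    have h1 : (West n - ∑ k ∈ range n, West k) - (T.V.card : ℝ)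
        = (West n - W n) - ∑ k ∈ range n, (West k - W k) := by
      rw [← htel, Finset.sum_sub_distrib]; ring
    rw [h1]
    calc |(West n - W n) - ∑ k ∈ range n, (West k - W k)|
        ≤ |West n - W n| + |∑ k ∈ range n, (West k - W k)| := abs_sub _ _
      _ ≤ |West n - W n| + ∑ k ∈ range n, |West k - W k| := by
          gcongr
          exact Finset.abs_sum_le_sum_abs _ _
      _ ≤ ζ * W n + ∑ k ∈ range n, ζ * W k := by
          gcongr with k hk
          · exact hW' n le_rfl
          · exact hW' k (mem_range.mp hk).le
  have hn1 : (n:ℝ) + 1 ≠ 0 := by positivity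
  calc |(West n - ∑ k ∈ range n, West k) - (T.V.card : ℝ)|
      ≤ ζ * W n + ∑ k ∈ range n, ζ * W k := key
    _ = ζ * (W n + ∑ k ∈ range n, W k) := by rw [← Finset.mul_sum]; ring
    _ ≤ ζ * (2 * W n) := by
        apply mul_le_mul_of_nonneg_left _ hζpos; linarith
    _ ≤ ζ * (2 * ((n+1) * 2^n)) := by
        apply mul_le_mul_of_nonneg_left _ hζpos; linarith
    _ = ξ * 2^n := by rw [hζdef]; field_simp
end

section
/- For a nonempty rooted binary tree S of height n, Σ_{k=0}^{n-1} W_k ≤ W_n, where W_i = Σ_{u: depth(u) ≤ i} 2^{i-depth(u)}. -/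
open Finset

lemma aux_geom (t : ℕ) : ∑ j ∈ Finset.range t, 2 ^ j ≤ 2 ^ t := by
  induction t with
  | zero => simp
  | succ t ih => rw [Finset.sum_range_succ, pow_succ]; omega

/-- For a nonempty binary tree of height $n$, $\sum_{k=0}^{n-1} W_k \le W_n$,
where $W_i$ is the weighted count of the depth-$i$ truncation.  (The depth-$n$
truncation is all of $S$.) -/
theorem stmt13 (n : ℕ) (T : BinTree n) :
    ∑ k ∈ Finset.range n,
        ∑ u ∈ T.V.filter (fun u => u.length ≤ k), 2 ^ (k - u.length)
      ≤ ∑ u ∈ T.V, 2 ^ (n - u.length) := by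
  simp only [Finset.sum_filter]
  rw [Finset.sum_comm]
  apply Finset.sum_le_sum
  intro u _
  calc ∑ k ∈ Finset.range n, (if u.length ≤ k then 2 ^ (k - u.length) else 0)
      = ∑ k ∈ (Finset.range n).filter (fun k => u.length ≤ k), 2 ^ (k - u.length) := by
        rw [Finset.sum_filter]
    _ = ∑ k ∈ Finset.Ico u.length n, 2 ^ (k - u.length) := by
        congr 1
        ext k
        simp only [Finset.mem_filter, Finset.mem_range, Finset.mem_Ico]; exact and_comm
    _ = ∑ j ∈ Finset.range (n - u.length), 2 ^ j := by
        rw [Finset.sum_Ico_eq_sum_range]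
        simp
    _ ≤ 2 ^ (n - u.length) := aux_geom _
end
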